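/- Let g : [0,∞) → ℝ be twice differentiable with g'' (t) + ν g(t) ≤ 0 for all t, where ν > 0, and g(0) = g'(0) = 0. Define M(t) = sup{-g(s) : 0 ≤ s ≤ t}. Then g(t) ≤ M(t) for all t ≥ 0. -/

import Mathlib

/-- If `g` is C² with `g'' + ν g ≤ 0` on `[0,∞)`, `ν > 0`,
`g(0) = g'(0) = 0`, and `M(t) = sup {-g(s) : 0 ≤ s ≤ t}`, then `g(t) ≤ M(t)`. -/
theorem stmt1 (g : ℝ → ℝ) (ν : ℝ) (hν : 0 < ν)
    (hg : ContDiff ℝ 2 g)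
    (hineq : ∀ t ≥ (0 : ℝ), iteratedDeriv 2 g t + ν * g t ≤ 0)
    (hg0 : g 0 = 0) (hg'0 : deriv g 0 = 0) :
    ∀ t ≥ (0 : ℝ), g t ≤ sSup ((fun s => -g s) '' Set.Icc 0 t) := by
  intro t ht
  set l := Real.sqrt ν with hl_def
  have hl : 0 < l := Real.sqrt_pos.2 hν
  have hl2 : l * l = ν := Real.mul_self_sqrt hν.le
  have hg1 : ContDiff ℝ 1 (deriv g) := by
    have h2 := contDiff_succ_iff_deriv.mp
      (show ContDiff ℝ ((1 : ℕ) + 1) g by exact_mod_cast hg)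
    exact_mod_cast h2.2.2
  have hdg : Differentiable ℝ (deriv g) := hg1.differentiable one_ne_zero
  have hgd : Differentiable ℝ g := hg.differentiable two_ne_zero
  have hineq' : ∀ s ≥ (0:ℝ), deriv (deriv g) s + ν * g s ≤ 0 := by
    intro s hs
    have := hineq s hs
    simpa [iteratedDeriv_succ, iteratedDeriv_one] using this
  set W : ℝ → ℝ := fun s =>
    deriv g s * Real.sin (l * (t - s)) + l * g s * Real.cos (l * (t - s)) with hWdef
  have hWd : ∀ s : ℝ, HasDerivAt W
      ((deriv (deriv g) s + ν * g s) * Real.sin (l * (t - s))) s := by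
    intro s
    have h1 : HasDerivAt (fun s : ℝ => l * (t - s)) (-l) s := by
      simpa using ((hasDerivAt_id s).const_sub t).const_mul l
    have hsin : HasDerivAt (fun s : ℝ => Real.sin (l * (t - s)))
        (Real.cos (l * (t - s)) * (-l)) s := (Real.hasDerivAt_sin _).comp s h1
    have hcos : HasDerivAt (fun s : ℝ => Real.cos (l * (t - s)))
        (-Real.sin (l * (t - s)) * (-l)) s := (Real.hasDerivAt_cos _).comp s h1
    have hg' : HasDerivAt (deriv g) (deriv (deriv g) s) s := (hdg s).hasDerivAt
    have hgg : HasDerivAt g (deriv g s) s := (hgd s).hasDerivAt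
    have hmain := (hg'.mul hsin).add ((hgg.const_mul l).mul hcos)
    refine hmain.congr_deriv ?_
    rw [← hl2]; ring
  set a := max 0 (t - Real.pi / l) with ha_def
  have ha0 : 0 ≤ a := le_max_left _ _
  have hat : a ≤ t := max_le ht (by nlinarith [Real.pi_pos, div_pos Real.pi_pos hl])
  have hsin_nonneg : ∀ s ∈ Set.Icc a t, 0 ≤ Real.sin (l * (t - s)) := by
    intro s hs
    apply Real.sin_nonneg_of_nonneg_of_le_pi
    · exact mul_nonneg hl.le (by linarith [hs.2])
    · have h1 : t - Real.pi / l ≤ a := le_max_right _ _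
      have h2 : t - s ≤ Real.pi / l := by linarith [hs.1]
      calc l * (t - s) ≤ l * (Real.pi / l) := by nlinarith
        _ = Real.pi := by field_simp
  have hmono : AntitoneOn W (Set.Icc a t) := by
    apply antitoneOn_of_deriv_nonpos (convex_Icc a t)
    · exact fun s _ => ((hWd s).differentiableAt.continuousAt).continuousWithinAt
    · intro s hs
      exact (hWd s).differentiableAt.differentiableWithinAt
    · intro s hs
      rw [interior_Icc] at hs
      rw [(hWd s).deriv]
      have hs0 : (0:ℝ) ≤ s := le_trans ha0 hs.1.le
      have h1 := hineq' s hs0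
      have h2 := hsin_nonneg s ⟨hs.1.le, hs.2.le⟩
      exact mul_nonpos_of_nonpos_of_nonneg h1 h2
  have hkey : W t ≤ W a := hmono ⟨le_refl a, hat⟩ ⟨hat, le_refl t⟩ hat
  have hWt : W t = l * g t := by simp [hWdef]
  have hbdd : BddAbove ((fun s => -g s) '' Set.Icc 0 t) :=
    (isCompact_Icc.image_of_continuousOn (hgd.continuous.neg.continuousOn)).bddAbove
  have hmem : ∀ s ∈ Set.Icc (0:ℝ) t, -g s ≤ sSup ((fun s => -g s) '' Set.Icc 0 t) :=
    fun s hs => le_csSup hbdd ⟨s, hs, rfl⟩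
  by_cases hc : t - Real.pi / l ≤ 0
  · have haeq : a = 0 := max_eq_left hc
    have hWa : W a = 0 := by simp [hWdef, haeq, hg0, hg'0]
    have hgt : g t ≤ 0 := by
      rw [hWa, hWt] at hkey; nlinarith
    have h0 := hmem 0 ⟨le_refl 0, ht⟩
    rw [hg0] at h0; simpa using le_trans hgt (by simpa using h0)
  · push_neg at hc
    have haeq : a = t - Real.pi / l := max_eq_right hc.le
    have hla : l * (t - a) = Real.pi := by rw [haeq]; field_simp; ring
    have hWa : W a = -(l * g a) := by
      simp only [hWdef]
      rw [hla, Real.sin_pi, Real.cos_pi]; ring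
    have hgt : g t ≤ -g a := by
      rw [hWa, hWt] at hkey; nlinarith
    have h0 := hmem a ⟨ha0, hat⟩
    exact le_trans hgt h0
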